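/- Let f ∈ H and let p_1, …, p_n ∈ E be points whose Gram matrix A_n is positive definite. Let F_n ∈ ℂ^n be the vector with entries (F_n)_j = ⟨f, h(p_j)⟩. Then ‖f − f*_{A_n}‖² = ‖f‖² − conj(F_n) · A_n^{-1} · F_nᵀ (where conj(F_n) · A_n^{-1} · F_nᵀ = Σ_{j,k} conj((F_n)_j) (A_n^{-1})_{j,k} (F_n)_k, a nonnegative real number). -/
import Mathlib
set_option maxHeartbeats 1000000


open scoped ComplexInnerProductSpace ComplexOrder

/-- **Aveiro Method: energy identity.**
With the setup of the Aveiro method (Gram matrix `A` positive definite) and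
`F j = ⟨f, h (p j)⟩` (in Mathlib's convention `⟪h (p j), f⟫`), one has
`‖f − f*_A‖² = ‖f‖² − conj(F) ⬝ A⁻¹ ⬝ Fᵀ`, the subtracted quantity being
`∑_{j,k} conj(F j) (A⁻¹)_{j,k} F k` (a nonnegative real number, the identity being stated
as an equality of complex numbers). -/
theorem stmt2 {H : Type*} [NormedAddCommGroup H] [InnerProductSpace ℂ H] [CompleteSpace H]
    {E : Type*} (h : E → H) (n : ℕ) (p : Fin n → E) (f : H)
    (A : Matrix (Fin n) (Fin n) ℂ)
    (hA : ∀ j k, A j k = ⟪h (p j), h (p k)⟫)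
    (hpos : A.PosDef)
    (F : Fin n → ℂ) (hF : ∀ j, F j = ⟪h (p j), f⟫)
    (fstar : H)
    (hfstar : fstar = ∑ j : Fin n, ∑ k : Fin n,
      (⟪h (p j), f⟫ * (starRingEnd ℂ) (A⁻¹ j k)) • h (p k)) :
    (‖f - fstar‖ : ℂ) ^ 2 =
      (‖f‖ : ℂ) ^ 2 - ∑ j : Fin n, ∑ k : Fin n, (starRingEnd ℂ) (F j) * A⁻¹ j k * F k := by
  set B := A⁻¹ with hB
  have hdet : IsUnit A.det := (Matrix.isUnit_iff_isUnit_det A).mp hpos.isUnit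
  have hAB : A * B = 1 := Matrix.mul_nonsing_inv A hdet
  have hHerm : B.IsHermitian := hpos.isHermitian.inv
  have hBconj : ∀ j k, (starRingEnd ℂ) (B j k) = B k j := by
    intro j k
    have := congrFun (congrFun hHerm k) j
    simpa [Matrix.conjTranspose_apply] using this
  -- key: ⟪h (p k), fstar⟫ = F k
  have key : ∀ x : Fin n, ⟪h (p x), fstar⟫ = F x := by
    intro x
    rw [hfstar]
    simp only [inner_sum, inner_smul_right, ← hF]
    have : ∀ j : Fin n, ∑ k : Fin n, F j * (starRingEnd ℂ) (B j k) * ⟪h (p x), h (p k)⟫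
        = F j * (1 : Matrix (Fin n) (Fin n) ℂ) x j := by
      intro j
      rw [← hAB, Matrix.mul_apply, Finset.mul_sum]
      refine Finset.sum_congr rfl fun k _ => ?_
      rw [hBconj, ← hA]
      ring
    calc ∑ j : Fin n, ∑ k : Fin n, F j * (starRingEnd ℂ) (B j k) * ⟪h (p x), h (p k)⟫
        = ∑ j : Fin n, F j * (1 : Matrix (Fin n) (Fin n) ℂ) x j := by
          exact Finset.sum_congr rfl fun j _ => this j
      _ = F x := by
          simp [Matrix.one_apply, eq_comm]
  -- inner of fstar with anything
  have expand : ∀ x : H, ⟪fstar, x⟫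
      = ∑ j : Fin n, ∑ k : Fin n, (starRingEnd ℂ) (F j) * B j k * ⟪h (p k), x⟫ := by
    intro x
    rw [hfstar]
    simp only [sum_inner, inner_smul_left, map_mul, Complex.conj_conj, ← hF]
  set S : ℂ := ∑ j : Fin n, ∑ k : Fin n, (starRingEnd ℂ) (F j) * B j k * F k with hS
  have h1 : ⟪fstar, f⟫ = S := by
    rw [expand, hS]
    exact Finset.sum_congr rfl fun j _ => Finset.sum_congr rfl fun k _ => by rw [hF k]
  have h2 : ⟪fstar, fstar⟫ = S := by
    rw [expand, hS]
    exact Finset.sum_congr rfl fun j _ => Finset.sum_congr rfl fun k _ => by rw [key]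
  have h3 : ⟪f, fstar⟫ = (starRingEnd ℂ) S := by
    rw [← inner_conj_symm, h1]
  have hSreal : (starRingEnd ℂ) S = S := by
    rw [hS]
    simp only [map_sum, map_mul, Complex.conj_conj, hBconj]
    rw [Finset.sum_comm]
    exact Finset.sum_congr rfl fun j _ => Finset.sum_congr rfl fun k _ => by ring
  have hexp : ⟪f - fstar, f - fstar⟫ = ⟪f, f⟫ - S := by
    rw [inner_sub_left, inner_sub_right, inner_sub_right, h1, h2, h3, hSreal]
    ring
  have e1 : (‖f - fstar‖ : ℂ) ^ 2 = ⟪f - fstar, f - fstar⟫ :=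
    (inner_self_eq_norm_sq_to_K (𝕜 := ℂ) (f - fstar)).symm
  have e2 : (‖f‖ : ℂ) ^ 2 = ⟪f, f⟫ := (inner_self_eq_norm_sq_to_K (𝕜 := ℂ) f).symm
  rw [e1, e2, hexp]
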